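/- Let p be a prime, G a finite group, S a normal subgroup of G of order coprime to p, and P a p-subgroup of G such that G = S·C_G(P). Let k be a commutative ring and, for x ∈ P, let K_x ∈ k[G] denote the class sum of x. Then the k-linear truncation map k[G] → k[C_G(P)] sending Σ a_g·g to Σ_{g ∈ C_G(P)} a_g·g sends K_x to the basis element x. -/

import Mathlib

open scoped Classical in
/-- The class sum of `x` in the group algebra `k[G]`: the sum of the elements of the
conjugacy class of `x` in `G`. -/
noncomputable def classSum (k : Type*) [CommRing k] {G : Type*} [Group G] [Fintype G]
    (x : G) : MonoidAlgebra k G :=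
  ∑ g : G, if ∃ c : G, g = c * x * c⁻¹ then MonoidAlgebra.single g (1 : k) else 0

/-- The `k`-linear truncation map `k[G] → k[H]`, sending `Σ a_g·g` to `Σ_{g ∈ H} a_g·g`. -/
noncomputable def trunc (k : Type*) [CommRing k] {G : Type*} [Group G] (H : Subgroup G)
    (a : MonoidAlgebra k G) : MonoidAlgebra k H :=
  MonoidAlgebra.ofCoeff (Finsupp.comapDomain Subtype.val a.coeff Subtype.val_injective.injOn)

/-- With `S ⊴ G` of order coprime to `p` and `P` a `p`-subgroup with
`G = S·C_G(P)`, for `x ∈ P` the truncation map `k[G] → k[C_G(P)]` sends the class sum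
`K_x` to the basis element `x` (in particular `x` lies in `C_G(P)`). -/
theorem stmt_12 (p : ℕ) (hp : p.Prime) (G : Type*) [Group G] [Fintype G]
    (S : Subgroup G) (hS : S.Normal) (hScop : Nat.Coprime (Nat.card S) p)
    (P : Subgroup G) (hP : IsPGroup p P)
    (hfact : ∀ g : G, ∃ s ∈ S, ∃ c ∈ Subgroup.centralizer (P : Set G), g = s * c)
    (k : Type*) [CommRing k] (x : G) (hx : x ∈ P) :
    ∃ hxc : x ∈ Subgroup.centralizer (P : Set G),
      trunc k (Subgroup.centralizer (P : Set G)) (classSum k x)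
        = MonoidAlgebra.single (⟨x, hxc⟩ : Subgroup.centralizer (P : Set G)) (1 : k) := by
  classical
  set C := Subgroup.centralizer (P : Set G) with hCdef
  obtain ⟨n, hn⟩ := hP ⟨x, hx⟩
  have hxn : x ^ p ^ n = 1 := by
    have := congrArg (Subtype.val) hn
    simpa using this
  have hordS : ∀ s ∈ S, (orderOf s).Coprime (p ^ n) := by
    intro s hsS
    have hdvd : orderOf s ∣ Nat.card S := by
      rw [← Subgroup.orderOf_mk s hsS]
      exact orderOf_dvd_natCard _
    exact (Nat.Coprime.coprime_dvd_left hdvd (hScop.pow_right n))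
  have hxc : x ∈ C := by
    obtain ⟨s, hsS, c, hcC, hxe⟩ := hfact x
    have hxcc : Commute x c := Subgroup.mem_centralizer_iff.mp hcC x hx
    have hs : s = x * c⁻¹ := by rw [hxe]; group
    have hsp : s ^ p ^ n = (c⁻¹) ^ p ^ n := by
      rw [hs, (hxcc.inv_right).mul_pow, hxn, one_mul]
    obtain ⟨m, hm⟩ := exists_pow_eq_self_of_coprime (hordS s hsS).symm
    have hspC : s ^ p ^ n ∈ C := by rw [hsp]; exact pow_mem (inv_mem hcC) _
    have hsC : s ∈ C := by rw [← hm]; exact pow_mem hspC m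
    rw [hxe]; exact mul_mem hsC hcC
  have key : ∀ h, h ∈ C → ((∃ c : G, h = c * x * c⁻¹) ↔ h = x) := by
    intro h hh
    constructor
    · rintro ⟨g, rfl⟩
      obtain ⟨s, hsS, c, hcC, rfl⟩ := hfact g
      have hxcc : Commute x c := Subgroup.mem_centralizer_iff.mp hcC x hx
      have hconj : s * c * x * (s * c)⁻¹ = s * x * s⁻¹ := by
        have hcx : c * x * c⁻¹ = x := by rw [← hxcc.eq]; group
        calc s * c * x * (s * c)⁻¹ = s * (c * x * c⁻¹) * s⁻¹ := by group
        _ = s * x * s⁻¹ := by rw [hcx]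
      rw [hconj] at hh ⊢
      set t := s * x * s⁻¹ * x⁻¹ with htdef
      have htS : t ∈ S := by
        have : s * x * s⁻¹ * x⁻¹ = s * (x * s⁻¹ * x⁻¹) := by group
        rw [htdef, this]
        exact mul_mem hsS (hS.conj_mem s⁻¹ (inv_mem hsS) x)
      have hcomm : Commute (s * x * s⁻¹) x⁻¹ := by
        have h1 : x * (s * x * s⁻¹) = (s * x * s⁻¹) * x :=
          Subgroup.mem_centralizer_iff.mp hh x hx
        have h2 : Commute x (s * x * s⁻¹) := h1
        exact h2.symm.inv_right
      have htn : t ^ p ^ n = 1 := by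
        rw [htdef, hcomm.mul_pow, conj_pow, hxn, inv_pow, hxn]
        group
      have ht1 : t = 1 := by
        have hdvd : orderOf t ∣ p ^ n := orderOf_dvd_of_pow_eq_one htn
        have : orderOf t = 1 := Nat.eq_one_of_dvd_coprimes (hordS t htS) dvd_rfl hdvd
        exact orderOf_eq_one_iff.mp this
      have := mul_inv_eq_one.mp ht1
      exact this
    · rintro rfl; exact ⟨1, by group⟩
  refine ⟨hxc, ?_⟩
  ext a
  obtain ⟨h, hh⟩ := a
  rw [trunc, Finsupp.comapDomain_apply]
  have lhs : (classSum k x).coeff h = if ∃ c : G, h = c * x * c⁻¹ then (1 : k) else 0 := by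
    rw [classSum, MonoidAlgebra.coeff_sum, Finsupp.finset_sum_apply]
    rw [Finset.sum_eq_single h]
    · split_ifs with h1
      · simp [MonoidAlgebra.coeff_single]
      · simp
    · intro g _ hgh
      split_ifs with h1
      · exact Finsupp.single_eq_of_ne hgh.symm
      · simp
    · simp
  rw [lhs, if_congr (key h hh) rfl rfl]
  simp [MonoidAlgebra.coeff_single, Finsupp.single_apply, Subtype.ext_iff, eq_comm]
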